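/- arXiv:1310.7626 — 2 statements merged into one kernel-verified Lean document; each statement's English description precedes it below -/
import Mathlib

section
/- Scalar Neumann-type expansion for the pseudo-kernel: for quaternions s, p with |p| < |s|, the quaternion-valued function (s̄B - Bp)(p² - 2Re(s)p + |s|²)⁻¹ equals Σ_{m≥0} s^{-1-m} B pᵐ for every quaternion B; in particular taking B = 1, (s̄ - p)(p² - 2Re(s)p + |s|²)⁻¹ = Σ_{m≥0} s^{-1-m} pᵐ, the slice-hyperholomorphic Cauchy kernel expansion. -/
open scoped Quaternion

private theorem charpoly (p : ℍ[ℝ]) : p ^ 2 - (2 * p.re) • p + ((‖p‖ ^ 2 : ℝ) : ℍ[ℝ]) = 0 := by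
  have h1 : ((‖p‖ ^ 2 : ℝ) : ℍ[ℝ]) = star p * p := by
    rw [Quaternion.star_mul_self, sq, Quaternion.normSq_eq_norm_mul_self]
  rw [h1, ← Quaternion.coe_mul_eq_smul, ← Quaternion.self_add_star']
  ring_nf
  rw [sq]
  noncomm_ring

theorem Qne (s p : ℍ[ℝ]) (h : ‖p‖ < ‖s‖) :
    p ^ 2 - (2 * s.re) • p + ((‖s‖ ^ 2 : ℝ) : ℍ[ℝ]) ≠ 0 := by
  intro hQ0
  set c : ℝ := 2 * p.re - 2 * s.re with hcdef
  set d : ℝ := ‖s‖ ^ 2 - ‖p‖ ^ 2 with hddef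
  have key : c • p + (d : ℍ[ℝ]) = 0 := by
    have hch := charpoly p
    have e : c • p + (d : ℍ[ℝ])
        = (p ^ 2 - (2 * s.re) • p + ((‖s‖ ^ 2 : ℝ) : ℍ[ℝ]))
          - (p ^ 2 - (2 * p.re) • p + ((‖p‖ ^ 2 : ℝ) : ℍ[ℝ])) := by
      rw [hcdef, hddef]; push_cast; module
    rw [e, hQ0, hch, sub_zero]
  have hre := congrArg QuaternionAlgebra.re key
  have hI := congrArg QuaternionAlgebra.imI key
  have hJ := congrArg QuaternionAlgebra.imJ key
  have hK := congrArg QuaternionAlgebra.imK key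
  simp only [Quaternion.re_add, Quaternion.re_smul, Quaternion.re_coe, Quaternion.re_zero,
    Quaternion.imI_add, Quaternion.imI_smul, Quaternion.imI_coe, Quaternion.imI_zero,
    Quaternion.imJ_add, Quaternion.imJ_smul, Quaternion.imJ_coe, Quaternion.imJ_zero,
    Quaternion.imK_add, Quaternion.imK_smul, Quaternion.imK_coe, Quaternion.imK_zero,
    add_zero, smul_eq_mul] at hre hI hJ hK
  have hsq : s.re ^ 2 ≤ ‖s‖ ^ 2 := by
    rw [sq (‖s‖), ← Quaternion.normSq_eq_norm_mul_self, Quaternion.normSq_def']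
    nlinarith [sq_nonneg s.imI, sq_nonneg s.imJ, sq_nonneg s.imK]
  by_cases hc : c = 0
  · rw [hc, zero_mul, zero_add] at hre
    have : ‖p‖ = ‖s‖ := by
      rw [hddef] at hre
      nlinarith [norm_nonneg p, norm_nonneg s]
    linarith
  · rw [mul_eq_zero] at hI hJ hK
    have hpre : p = ((p.re : ℝ) : ℍ[ℝ]) := by
      ext <;> simp [hI.resolve_left hc, hJ.resolve_left hc, hK.resolve_left hc]
    rw [hpre] at hQ0 h
    rw [Quaternion.norm_coe, Real.norm_eq_abs] at h
    have hr : p.re ^ 2 - 2 * s.re * p.re + ‖s‖ ^ 2 = 0 := by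
      apply Quaternion.coe_injective
      push_cast
      rw [← hQ0, ← Quaternion.coe_mul_eq_smul]
      push_cast
      ring
    nlinarith [sq_nonneg (p.re - s.re), mul_self_lt_mul_self (abs_nonneg p.re) h,
      abs_mul_abs_self p.re]

private theorem main (s p : ℍ[ℝ]) (h : ‖p‖ < ‖s‖) (hQ : p ^ 2 - (2 * s.re) • p + ((‖s‖ ^ 2 : ℝ) : ℍ[ℝ]) ≠ 0) (B : ℍ[ℝ]) :
    HasSum (fun m : ℕ => s⁻¹ ^ (m + 1) * B * p ^ m)
      ((star s * B - B * p) * (p ^ 2 - (2 * s.re) • p + ((‖s‖ ^ 2 : ℝ) : ℍ[ℝ]))⁻¹) := by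
  have hs0 : (0:ℝ) < ‖s‖ := lt_of_le_of_lt (norm_nonneg p) h
  have hs : s ≠ 0 := by simpa using norm_pos_iff.mp hs0
  set Q : ℍ[ℝ] := p ^ 2 - (2 * s.re) • p + ((‖s‖ ^ 2 : ℝ) : ℍ[ℝ]) with hQdef
  set f : ℕ → ℍ[ℝ] := fun m => s⁻¹ ^ (m + 1) * B * p ^ m with hfdef
  have hr1 : ‖p‖ * ‖s‖⁻¹ < 1 := by
    rw [← div_eq_mul_inv, div_lt_one hs0]; exact h
  have hnorm : ∀ m, ‖f m‖ = (‖s‖⁻¹ * ‖B‖) * (‖p‖ * ‖s‖⁻¹) ^ m := by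
    intro m
    simp only [hfdef, norm_mul, norm_pow, norm_inv, mul_pow]
    ring
  have hsum : Summable f := by
    apply Summable.of_norm_bounded
      (((summable_geometric_of_lt_one (by positivity) hr1)).mul_left (‖s‖⁻¹ * ‖B‖))
    intro m; rw [hnorm m]
  obtain ⟨T, hT⟩ := hsum
  set g : ℕ → ℍ[ℝ] := fun m => s⁻¹ ^ m * B * p ^ (m+1) - star s * (s⁻¹ ^ m * B * p ^ m) with hgdef
  have hcan : ∀ m : ℕ, s * s⁻¹ ^ (m + 1) = s⁻¹ ^ m := by
    intro m; rw [pow_succ', ← mul_assoc, mul_inv_cancel₀ hs, one_mul]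
  have e1 : ((‖s‖^2:ℝ):ℍ[ℝ]) = star s * s := by
    rw [Quaternion.star_mul_self, sq, Quaternion.normSq_eq_norm_mul_self]
  have coe_left : ∀ (r:ℝ) (x y:ℍ[ℝ]), x * ((r:ℍ[ℝ]) * y) = (r:ℍ[ℝ]) * (x * y) := by
    intro r x y; rw [← mul_assoc, ← Quaternion.coe_commutes, mul_assoc]
  have hfQ : ∀ m, f m * Q = g (m+1) - g m := by
    intro m
    have hcan1 : ∀ x : ℍ[ℝ], s * (s⁻¹ ^ (m+1) * x) = s⁻¹ ^ m * x := by
      intro x; rw [← mul_assoc, hcan m]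
    simp only [hfdef, hQdef, hgdef]
    rw [← Quaternion.coe_mul_eq_smul]
    rw [mul_add, mul_sub, coe_left, Quaternion.mul_coe_eq_smul, ← Quaternion.coe_mul_eq_smul,
      e1, ← Quaternion.self_add_star']
    simp only [add_mul, mul_assoc, hcan1, ← pow_succ, ← pow_add]
    ring_nf
    abel
  have h1 : Filter.Tendsto (fun n => ∑ i ∈ Finset.range n, f i * Q) Filter.atTop (nhds (T * Q)) :=
    (hT.mul_right Q).tendsto_sum_nat
  have hg0 : Filter.Tendsto g Filter.atTop (nhds 0) := by
    apply squeeze_zero_norm (a := fun n => (‖B‖*‖p‖ + ‖s‖*‖B‖) * (‖p‖ * ‖s‖⁻¹)^n)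
    · intro n
      have : ‖g n‖ ≤ ‖s⁻¹ ^ n * B * p ^ (n+1)‖ + ‖star s * (s⁻¹ ^ n * B * p ^ n)‖ := norm_sub_le _ _
      refine this.trans (le_of_eq ?_)
      simp only [norm_mul, norm_pow, norm_inv, norm_star, mul_pow]
      ring
    · simpa using (tendsto_pow_atTop_nhds_zero_of_lt_one (by positivity) hr1).const_mul (‖B‖*‖p‖ + ‖s‖*‖B‖)
  have h2 : Filter.Tendsto (fun n => ∑ i ∈ Finset.range n, f i * Q) Filter.atTop
      (nhds (star s * B - B * p)) := by
    have hps : ∀ n, ∑ i ∈ Finset.range n, f i * Q = g n - g 0 := by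
      intro n
      rw [show (fun i => f i * Q) = fun i => g (i+1) - g i from funext hfQ]
      exact Finset.sum_range_sub g n
    simp only [hps]
    have : Filter.Tendsto (fun n => g n - g 0) Filter.atTop (nhds (0 - g 0)) := hg0.sub_const (g 0)
    convert this using 2
    simp [hgdef, pow_one]
  have hTQ : T * Q = star s * B - B * p := tendsto_nhds_unique h1 h2
  have hTval : T = (star s * B - B * p) * Q⁻¹ := (eq_mul_inv_iff_mul_eq₀ hQ).mpr hTQ
  rwa [hTval] at hT

/-- Scalar Neumann-type expansion for the pseudo-kernel: for `|p| < |s|` and any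
quaternion `B`, `(s̄B - Bp)(p² - 2Re(s)p + |s|²)⁻¹ = Σ_{m≥0} s^{-1-m} B pᵐ`;
in particular, with `B = 1`, `(s̄ - p)(p² - 2Re(s)p + |s|²)⁻¹ = Σ_{m≥0} s^{-1-m} pᵐ`. -/
theorem pseudo_kernel_series_expansion (s p : ℍ[ℝ]) (h : ‖p‖ < ‖s‖) :
    (∀ B : ℍ[ℝ],
      HasSum (fun m : ℕ => s⁻¹ ^ (m + 1) * B * p ^ m)
        ((star s * B - B * p) * (p ^ 2 - (2 * s.re) • p + ((‖s‖ ^ 2 : ℝ) : ℍ[ℝ]))⁻¹)) ∧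
    HasSum (fun m : ℕ => s⁻¹ ^ (m + 1) * p ^ m)
      ((star s - p) * (p ^ 2 - (2 * s.re) • p + ((‖s‖ ^ 2 : ℝ) : ℍ[ℝ]))⁻¹) := by
  have hQ := Qne s p h
  refine ⟨fun B => main s p h hQ B, ?_⟩
  simpa using main s p h hQ 1
end

section
/- For a diagonalizable model case: if s, p are quaternions with p ∉ [s], then the quaternion K := (p - s̄)·(p² - 2Re(s)p + |s|²)⁻¹ satisfies the scalar version of the new resolvent equation with T replaced by a quaternion q ∉ [s] ∪ [p]: S_R^{-1}(s,q)S_L^{-1}(p,q) = ([S_R^{-1}(s,q) - S_L^{-1}(p,q)]p - s̄[S_R^{-1}(s,q) - S_L^{-1}(p,q)])(p² - 2Re(s)p + |s|²)⁻¹, where S_L^{-1}(p,q) = -(q² - 2Re(p)q + |p|²)⁻¹(q - p̄) and S_R^{-1}(s,q) = -(q - s̄)(q² - 2Re(s)q + |s|²)⁻¹. -/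
open scoped Quaternion

open Quaternion in
private lemma norm_sq_coe (x : ℍ[ℝ]) :
    ((‖x‖ ^ 2 : ℝ) : ℍ[ℝ]) = ((normSq x : ℝ) : ℍ[ℝ]) := by
  congr 1
  rw [sq, ← Quaternion.normSq_eq_norm_mul_self]

open Quaternion in
/-- Characteristic polynomial relation for a quaternion. -/
private lemma quat_char (x : ℍ[ℝ]) :
    x ^ 2 - ((2 * x.re : ℝ) : ℍ[ℝ]) * x + ((‖x‖ ^ 2 : ℝ) : ℍ[ℝ]) = 0 := by
  rw [norm_sq_coe]
  have h1 : x * star x = ((normSq x : ℝ) : ℍ[ℝ]) := Quaternion.self_mul_star x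
  have h2 : star x = ((2 * x.re : ℝ) : ℍ[ℝ]) - x := by
    rw [eq_sub_iff_add_eq]
    exact Quaternion.star_add_self' x
  rw [h2, mul_sub] at h1
  have h3 : x * ((2 * x.re : ℝ) : ℍ[ℝ]) = ((2 * x.re : ℝ) : ℍ[ℝ]) * x :=
    (Quaternion.coe_commutes _ x).symm
  rw [h3] at h1
  rw [pow_two, ← h1]
  abel

private lemma sre_sq_le (s : ℍ[ℝ]) : s.re ^ 2 ≤ ‖s‖ ^ 2 := by
  have : (‖s‖ ^ 2 : ℝ) = Quaternion.normSq s := by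
    rw [sq, ← Quaternion.normSq_eq_norm_mul_self]
  rw [this, Quaternion.normSq_def']
  nlinarith [sq_nonneg s.imI, sq_nonneg s.imJ, sq_nonneg s.imK]

/-- The companion polynomial of `s` does not vanish at `q` if `q ∉ [s]`. -/
private lemma delta_ne (q s : ℍ[ℝ]) (h : ¬(q.re = s.re ∧ ‖q‖ = ‖s‖)) :
    q ^ 2 - ((2 * s.re : ℝ) : ℍ[ℝ]) * q + ((‖s‖ ^ 2 : ℝ) : ℍ[ℝ]) ≠ 0 := by
  intro h0
  have hq := quat_char q
  -- subtract: coe(2(q.re - s.re)) * q + coe(‖s‖² - ‖q‖²) = 0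
  have key : ((2 * (q.re - s.re) : ℝ) : ℍ[ℝ]) * q
      + ((‖s‖ ^ 2 - ‖q‖ ^ 2 : ℝ) : ℍ[ℝ]) = 0 := by
    have : ((2 * (q.re - s.re) : ℝ) : ℍ[ℝ]) * q + ((‖s‖ ^ 2 - ‖q‖ ^ 2 : ℝ) : ℍ[ℝ])
        = (q ^ 2 - ((2 * s.re : ℝ) : ℍ[ℝ]) * q + ((‖s‖ ^ 2 : ℝ) : ℍ[ℝ]))
          - (q ^ 2 - ((2 * q.re : ℝ) : ℍ[ℝ]) * q + ((‖q‖ ^ 2 : ℝ) : ℍ[ℝ])) := by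
      push_cast
      noncomm_ring
    rw [this, h0, hq, sub_zero]
  by_cases hc : q.re = s.re
  · -- then norms must differ, but key forces them equal
    apply h
    refine ⟨hc, ?_⟩
    rw [hc] at key
    simp only [sub_self, mul_zero, Quaternion.coe_zero, zero_mul, zero_add] at key
    have : (‖s‖ ^ 2 - ‖q‖ ^ 2 : ℝ) = 0 := by
      have := key
      rw [← Quaternion.coe_zero, Quaternion.coe_inj] at this
      exact this
    have hnn : ‖q‖ ^ 2 = ‖s‖ ^ 2 := by linarith
    have := abs_eq_abs.mpr (Or.inl (by nlinarith [norm_nonneg q, norm_nonneg s] : ‖q‖ = ‖s‖))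
    nlinarith [norm_nonneg q, norm_nonneg s]
  · -- q is real
    have h2 : (2 * (q.re - s.re) : ℝ) ≠ 0 := by
      intro hh; apply hc; linarith [hh]
    set r : ℝ := (‖q‖ ^ 2 - ‖s‖ ^ 2) / (2 * (q.re - s.re)) with hr
    have hqr : q = ((r : ℝ) : ℍ[ℝ]) := by
      have hco : ((2 * (q.re - s.re) : ℝ) : ℍ[ℝ]) ≠ 0 := fun hh =>
        h2 (by rwa [← Quaternion.coe_zero, Quaternion.coe_inj] at hh)
      have hmm : ((2 * (q.re - s.re) : ℝ) : ℍ[ℝ]) * q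
          = ((‖q‖ ^ 2 - ‖s‖ ^ 2 : ℝ) : ℍ[ℝ]) := by
        rw [← sub_eq_zero, ← key]
        have : ((‖q‖ ^ 2 - ‖s‖ ^ 2 : ℝ) : ℍ[ℝ]) = -((‖s‖ ^ 2 - ‖q‖ ^ 2 : ℝ) : ℍ[ℝ]) := by
          rw [← Quaternion.coe_neg, Quaternion.coe_inj]; ring
        rw [this]; noncomm_ring
      rw [← eq_inv_mul_iff_mul_eq₀ hco] at hmm
      rw [hr, div_eq_inv_mul, Quaternion.coe_mul, Quaternion.coe_inv, ← hmm]
    -- plug back into h0 : real polynomial equation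
    have hre : r ^ 2 - 2 * s.re * r + ‖s‖ ^ 2 = 0 := by
      rw [hqr] at h0
      have h5 : (((r ^ 2 - 2 * s.re * r + ‖s‖ ^ 2 : ℝ)) : ℍ[ℝ]) = 0 := by
        rw [← h0]; push_cast; ring
      rwa [← Quaternion.coe_zero, Quaternion.coe_inj] at h5
    have hle := sre_sq_le s
    have : r = s.re := by nlinarith [sq_nonneg (r - s.re)]
    apply hc
    have : q.re = r := by rw [hqr]; simp
    nlinarith [hre, hle, sq_nonneg (r - s.re), this]

/-- Abstract form of the computation, with the central elements `a`, `n`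
made explicit through commutation hypotheses. -/
private lemma key_computation (R L p q s a n : ℍ[ℝ])
    (ha : ∀ x : ℍ[ℝ], a * x = x * a) (hn : ∀ x : ℍ[ℝ], n * x = x * n)
    (hI : L * p = q * L + 1) (hII : s * R = R * q + 1)
    (hRA : R * (q ^ 2 - a * q + n) = -(q - (a - s))) :
    R * L * (p ^ 2 - a * p + n) = (R - L) * p - (a - s) * (R - L) := by
  have c1 : L * p ^ 2 = q ^ 2 * L + q + p := by
    rw [pow_two, ← mul_assoc, hI, add_mul, one_mul, mul_assoc, hI]
    noncomm_ring
  have c2 : L * (a * p) = a * (q * L + 1) := by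
    rw [show L * (a * p) = L * a * p by noncomm_ring, ← ha L, mul_assoc, hI]
  have c3 : L * n = n * L := (hn L).symm
  have e1 : R * L * (p ^ 2 - a * p + n)
      = R * (q ^ 2 - a * q + n) * L + R * (q + p - a) := by
    calc R * L * (p ^ 2 - a * p + n)
        = R * (L * p ^ 2) - R * (L * (a * p)) + R * (L * n) := by noncomm_ring
      _ = R * (q ^ 2 * L + q + p) - R * (a * (q * L + 1)) + R * (n * L) := by
          rw [c1, c2, c3]
      _ = R * (q ^ 2 - a * q + n) * L + R * (q + p - a) := by noncomm_ring
  rw [e1, hRA]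
  have e2 : (R - L) * p - (a - s) * (R - L)
      = R * p - L * p - a * R + s * R + a * L - s * L := by noncomm_ring
  rw [e2, hI, hII]
  have e3 : R * (q + p - a) = R * q + R * p - a * R := by
    rw [mul_sub, mul_add, ← ha R]
  rw [e3]
  noncomm_ring

/-- Scalar (diagonalizable model) version of the new S-resolvent equation: for
quaternions `s`, `p`, `q` with `p ∉ [s]` and `q ∉ [s] ∪ [p]`, the scalar Cauchy
kernels `S_L⁻¹(p,q) = -(q² - 2Re(p)q + |p|²)⁻¹(q - p̄)` and
`S_R⁻¹(s,q) = -(q - s̄)(q² - 2Re(s)q + |s|²)⁻¹` satisfy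
`S_R⁻¹(s,q)S_L⁻¹(p,q) = ([S_R⁻¹(s,q) - S_L⁻¹(p,q)]p - s̄[S_R⁻¹(s,q) - S_L⁻¹(p,q)])
(p² - 2Re(s)p + |s|²)⁻¹`. -/
theorem scalar_new_resolvent_equation (s p q : ℍ[ℝ])
    (hps : ¬(p.re = s.re ∧ ‖p‖ = ‖s‖))
    (hqs : ¬(q.re = s.re ∧ ‖q‖ = ‖s‖))
    (hqp : ¬(q.re = p.re ∧ ‖q‖ = ‖p‖)) :
    (-((q - star s) * (q ^ 2 - (2 * s.re) • q + ((‖s‖ ^ 2 : ℝ) : ℍ[ℝ]))⁻¹)) *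
        (-((q ^ 2 - (2 * p.re) • q + ((‖p‖ ^ 2 : ℝ) : ℍ[ℝ]))⁻¹ * (q - star p))) =
      (((-((q - star s) * (q ^ 2 - (2 * s.re) • q + ((‖s‖ ^ 2 : ℝ) : ℍ[ℝ]))⁻¹)) -
            (-((q ^ 2 - (2 * p.re) • q + ((‖p‖ ^ 2 : ℝ) : ℍ[ℝ]))⁻¹ * (q - star p)))) * p -
          star s *
            ((-((q - star s) * (q ^ 2 - (2 * s.re) • q + ((‖s‖ ^ 2 : ℝ) : ℍ[ℝ]))⁻¹)) -
              (-((q ^ 2 - (2 * p.re) • q + ((‖p‖ ^ 2 : ℝ) : ℍ[ℝ]))⁻¹ * (q - star p))))) *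
        (p ^ 2 - (2 * s.re) • p + ((‖s‖ ^ 2 : ℝ) : ℍ[ℝ]))⁻¹ := by
  simp only [← Quaternion.coe_mul_eq_smul]
  set A : ℍ[ℝ] := q ^ 2 - ((2 * s.re : ℝ) : ℍ[ℝ]) * q + ((‖s‖ ^ 2 : ℝ) : ℍ[ℝ]) with hAdef
  set B : ℍ[ℝ] := q ^ 2 - ((2 * p.re : ℝ) : ℍ[ℝ]) * q + ((‖p‖ ^ 2 : ℝ) : ℍ[ℝ]) with hBdef
  set C : ℍ[ℝ] := p ^ 2 - ((2 * s.re : ℝ) : ℍ[ℝ]) * p + ((‖s‖ ^ 2 : ℝ) : ℍ[ℝ]) with hCdef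
  have hA : A ≠ 0 := delta_ne q s hqs
  have hB : B ≠ 0 := delta_ne q p hqp
  have hC : C ≠ 0 := delta_ne p s hps
  set R : ℍ[ℝ] := -((q - star s) * A⁻¹) with hRdef
  set L : ℍ[ℝ] := -(B⁻¹ * (q - star p)) with hLdef
  -- commutation of q with A⁻¹ and B⁻¹
  have hcommA : Commute A q := by
    exact (((Commute.refl q).pow_left 2).sub_left
      ((Quaternion.coe_commute _ q).mul_left (Commute.refl q))).add_left
      (Quaternion.coe_commute _ q)
  have hcommB : Commute B q := by
    exact (((Commute.refl q).pow_left 2).sub_left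
      ((Quaternion.coe_commute _ q).mul_left (Commute.refl q))).add_left
      (Quaternion.coe_commute _ q)
  have hqA : q * A⁻¹ = A⁻¹ * q := (hcommA.symm.inv_right₀)
  have hqB : q * B⁻¹ = B⁻¹ * q := (hcommB.symm.inv_right₀)
  have hstar_s : star s = ((2 * s.re : ℝ) : ℍ[ℝ]) - s := by
    rw [eq_sub_iff_add_eq]; exact Quaternion.star_add_self' s
  have hstar_p : star p = ((2 * p.re : ℝ) : ℍ[ℝ]) - p := by
    rw [eq_sub_iff_add_eq]; exact Quaternion.star_add_self' p
  -- left S-resolvent equation for L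
  have h1B : q * (q - star p) - (q - star p) * p = B := by
    have e : q * (q - star p) - (q - star p) * p
        = q ^ 2 - q * (star p + p) + star p * p := by noncomm_ring
    rw [e, Quaternion.star_add_self', ← Quaternion.coe_commutes,
      Quaternion.star_mul_self, ← norm_sq_coe, hBdef]
  have h3B : B⁻¹ * (q * (q - star p) - (q - star p) * p) = 1 := by
    rw [h1B, inv_mul_cancel₀ hB]
  have hI : L * p = q * L + 1 := by
    rw [hLdef]
    simp only [mul_neg, neg_mul]
    rw [show q * (B⁻¹ * (q - star p)) = B⁻¹ * (q * (q - star p)) by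
      rw [← mul_assoc, hqB, mul_assoc], ← h3B]
    noncomm_ring
  -- right S-resolvent equation for R
  have h1A : (q - star s) * q - s * (q - star s) = A := by
    have e : (q - star s) * q - s * (q - star s)
        = q ^ 2 - (star s + s) * q + s * star s := by noncomm_ring
    rw [e, Quaternion.star_add_self', Quaternion.self_mul_star, ← norm_sq_coe, hAdef]
  have h3A : ((q - star s) * q - s * (q - star s)) * A⁻¹ = 1 := by
    rw [h1A, mul_inv_cancel₀ hA]
  have hII : s * R = R * q + 1 := by
    rw [hRdef]
    simp only [mul_neg, neg_mul]
    rw [show (q - star s) * A⁻¹ * q = (q - star s) * q * A⁻¹ by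
      rw [mul_assoc, ← hqA, ← mul_assoc], ← h3A]
    noncomm_ring
  have hRA : R * (q ^ 2 - ((2 * s.re : ℝ) : ℍ[ℝ]) * q + ((‖s‖ ^ 2 : ℝ) : ℍ[ℝ]))
      = -(q - (((2 * s.re : ℝ) : ℍ[ℝ]) - s)) := by
    rw [← hAdef, hRdef, neg_mul, mul_assoc, inv_mul_cancel₀ hA, mul_one, ← hstar_s]
  rw [eq_mul_inv_iff_mul_eq₀ hC, hstar_s, hCdef]
  exact key_computation R L p q s _ _ (fun x => Quaternion.coe_commutes _ x)
    (fun x => Quaternion.coe_commutes _ x) hI hII hRA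
end
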